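/- arXiv:1701.08354 — 3 statements merged into one kernel-verified Lean document; each statement's English description precedes it below -/
import Mathlib

section
/- For a Poisson energy arrival process with rate μ_H > 0 and threshold τ₁ ≥ 0, the average age of the one-threshold policy, given by Δ̄(τ₁) = (1/2)·(τ₁² + (2/μ_H² + 2τ₁/μ_H)·e^{-μ_H τ₁}) / (τ₁ + (1/μ_H)·e^{-μ_H τ₁}), is minimized at τ₁ = 2W(1/√2)/μ_H, where W is the Lambert W function, and the minimum value equals 2W(1/√2)/μ_H. -/
open Real

/-- For Poisson energy arrivals with rate `μ > 0`, the average age of the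
one-threshold policy is minimized at `τ₁ = 2 W(1/√2) / μ` with minimum value
`2 W(1/√2) / μ`, where `W` is the principal Lambert W function. -/
theorem avg_age_minimized_at_lambertW
    (μ : ℝ) (hμ : 0 < μ)
    (W : ℝ → ℝ)
    (hW : ∀ x ≥ (0:ℝ), 0 ≤ W x ∧ W x * Real.exp (W x) = x)
    (avgAge : ℝ → ℝ)
    (havg : ∀ τ ≥ (0:ℝ), avgAge τ =
      (τ ^ 2 + (2 / μ ^ 2 + 2 * τ / μ) * Real.exp (-μ * τ)) /
        (2 * (τ + (1 / μ) * Real.exp (-μ * τ)))) :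
    (∀ τ ≥ (0:ℝ), avgAge (2 * W (1 / Real.sqrt 2) / μ) ≤ avgAge τ) ∧
      avgAge (2 * W (1 / Real.sqrt 2) / μ) = 2 * W (1 / Real.sqrt 2) / μ := by
  obtain ⟨hw0, hwe⟩ := hW (1 / Real.sqrt 2) (by positivity)
  set w := W (1 / Real.sqrt 2) with hwdef
  have hs2 : Real.sqrt 2 * Real.sqrt 2 = 2 := Real.mul_self_sqrt (by norm_num)
  have hs2pos : (0:ℝ) < Real.sqrt 2 := by positivity
  -- w > 0
  have hwpos : 0 < w := by
    rcases hw0.lt_or_eq with h | h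
    · exact h
    · exfalso
      have : (0:ℝ) < 1 / Real.sqrt 2 := by positivity
      rw [← hwe, ← h] at this
      simp at this
  -- w^2 e^{2w} = 1/2
  have hsq : w ^ 2 * Real.exp (2 * w) = 1 / 2 := by
    have h := congrArg (· ^ 2) hwe
    simp only [mul_pow] at h
    have h2 : Real.exp w ^ 2 = Real.exp (2 * w) := by
      rw [sq, ← Real.exp_add, two_mul]
    have h3 : (1 / Real.sqrt 2) ^ 2 = 1 / 2 := by
      rw [div_pow, one_pow, sq, hs2]
    rw [h2, h3] at h
    exact h
  -- e^{-2w} = 2 w^2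
  have hw2 : Real.exp (-(2 * w)) = 2 * w ^ 2 := by
    have h4 : Real.exp (-(2 * w)) * Real.exp (2 * w) = 1 := by
      rw [← Real.exp_add]; simp
    have h5 : Real.exp (-(2 * w)) * Real.exp (2 * w) =
        (2 * w ^ 2) * Real.exp (2 * w) := by rw [h4]; nlinarith [hsq]
    exact mul_right_cancel₀ (Real.exp_ne_zero _) h5
  -- w ≤ 1/2
  have hwhalf : w ≤ 1 / 2 := by
    by_contra h
    push_neg at h
    have he2 : (2:ℝ) ≤ Real.exp 1 := by
      have := Real.add_one_le_exp (1:ℝ)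
      linarith
    have hsqe : Real.sqrt 2 ≤ Real.exp (1 / 2) := by
      have h1 : Real.exp 1 = Real.exp (1 / 2) ^ 2 := by
        rw [sq, ← Real.exp_add]; norm_num
      have := Real.sqrt_le_sqrt he2
      rwa [h1, Real.sqrt_sq (Real.exp_pos _).le] at this
    have hlt : (1 / 2 : ℝ) * Real.exp (1 / 2) < w * Real.exp w := by
      apply mul_lt_mul'' h (Real.exp_lt_exp.mpr h) (by norm_num) (Real.exp_pos _).le
    have hge : (1 : ℝ) / Real.sqrt 2 ≤ (1 / 2) * Real.exp (1 / 2) := by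
      rw [div_le_iff₀ hs2pos] at *
      nlinarith [hsqe, hs2pos, hs2]
    rw [hwe] at hlt
    linarith
  -- key inequality: for s ≥ 0, 4w(s + e^{-s}) ≤ s² + (2+2s)e^{-s}
  have key : ∀ s : ℝ, 0 ≤ s →
      4 * w * (s + Real.exp (-s)) ≤ s ^ 2 + (2 + 2 * s) * Real.exp (-s) := by
    intro s hs
    have hb := Real.add_one_le_exp (2 * w - s)
    have hE : (2 * w - s + 1) * (2 * w ^ 2) ≤ Real.exp (-s) := by
      have hm : (2 * w - s + 1) * Real.exp (-(2 * w)) ≤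
          Real.exp (2 * w - s) * Real.exp (-(2 * w)) := by
        apply mul_le_mul_of_nonneg_right hb (Real.exp_pos _).le
      rw [← Real.exp_add] at hm
      have : 2 * w - s + -(2 * w) = -s := by ring
      rw [this, hw2] at hm
      exact hm
    have hq : (0:ℝ) ≤ (s - 2 * w) ^ 2 * (1 - 4 * w ^ 2) := by
      apply mul_nonneg (sq_nonneg _)
      nlinarith [hwhalf, hw0]
    have hp : (0:ℝ) ≤ (s - 2 * w + 1) *
        (Real.exp (-s) - (2 * w - s + 1) * (2 * w ^ 2)) := by
      apply mul_nonneg (by linarith) (by linarith)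
    nlinarith [hp, hq, (Real.exp_pos (-s)).le]
  -- the minimizer point
  set t := 2 * w / μ with htdef
  have ht0 : (0:ℝ) ≤ t := by positivity
  have hexpval : Real.exp (-μ * t) = 2 * w ^ 2 := by
    have : -μ * t = -(2 * w) := by
      rw [htdef]; field_simp
    rw [this, hw2]
  -- value at the minimizer
  have hval : avgAge t = t := by
    rw [havg t ht0, hexpval]
    have hden : (2 * (t + 1 / μ * (2 * w ^ 2))) ≠ 0 := by positivity
    rw [div_eq_iff hden, htdef]
    field_simp
    ring
  constructor
  · intro τ hτ
    rw [hval, havg τ hτ, htdef]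
    have hEpos : 0 < Real.exp (-μ * τ) := Real.exp_pos _
    set E := Real.exp (-μ * τ) with hEdef
    have hD : 0 < 2 * (τ + 1 / μ * E) := by positivity
    rw [div_le_div_iff₀ hμ hD]
    have hk := key (μ * τ) (by positivity)
    rw [show -(μ * τ) = -μ * τ by ring, ← hEdef] at hk
    have h1 : 2 * w * (2 * (τ + 1 / μ * E)) = (4 * w * (μ * τ + E)) / μ := by
      field_simp; ring
    have h2 : (τ ^ 2 + (2 / μ ^ 2 + 2 * τ / μ) * E) * μ =
        ((μ * τ) ^ 2 + (2 + 2 * (μ * τ)) * E) / μ := by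
      field_simp
    rw [h1, h2, div_le_div_iff₀ hμ hμ]
    nlinarith [mul_le_mul_of_nonneg_right hk hμ.le]
  · rw [hval, htdef]
end

section
/- Let μ > 0 and define Δ̄(τ) = (τ² + (2/μ² + 2τ/μ)e^{-μτ}) / (2(τ + (1/μ)e^{-μτ})) for τ ≥ 0. Then any τ* > 0 that is a fixed point of Δ̄ (i.e., Δ̄(τ*) = τ*) is a global minimizer of Δ̄ on [0,∞). -/
open Real

/-- Any positive fixed point of the average-age function of the single-threshold
policy is a global minimizer on `[0, ∞)`. -/
theorem fixed_point_is_global_minimizer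
    (μ : ℝ) (hμ : 0 < μ)
    (avgAge : ℝ → ℝ)
    (havg : ∀ τ ≥ (0:ℝ), avgAge τ =
      (τ ^ 2 + (2 / μ ^ 2 + 2 * τ / μ) * Real.exp (-μ * τ)) /
        (2 * (τ + (1 / μ) * Real.exp (-μ * τ))))
    (τstar : ℝ) (hτ : 0 < τstar) (hfix : avgAge τstar = τstar) :
    ∀ τ ≥ (0:ℝ), avgAge τstar ≤ avgAge τ := by
  intro τ hτ0
  have hEτ : (0:ℝ) < Real.exp (-μ * τ) := Real.exp_pos _
  have hEs : (0:ℝ) < Real.exp (-μ * τstar) := Real.exp_pos _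
  have hDτ : 0 < 2 * (τ + (1 / μ) * Real.exp (-μ * τ)) := by positivity
  have hDs : 0 < 2 * (τstar + (1 / μ) * Real.exp (-μ * τstar)) := by positivity
  have hμ2 : (0:ℝ) < μ ^ 2 := by positivity
  -- fixed point equation ⇒ exp(-μ τ*) = μ² τ*² / 2
  have h1 := (havg τstar hτ.le).symm.trans hfix
  rw [div_eq_iff (ne_of_gt hDs)] at h1
  have h2 : 2 / μ ^ 2 * Real.exp (-μ * τstar) = τstar ^ 2 := by
    linear_combination h1
  have hEc : Real.exp (-μ * τstar) = μ ^ 2 * τstar ^ 2 / 2 := by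
    field_simp at h2 ⊢
    linarith [h2]
  -- hence μ τ* < 1
  have ha1 : μ * τstar < 1 := by
    by_contra h
    push_neg at h
    have h2' : Real.exp (-μ * τstar) ≤ Real.exp (-1) := by
      apply Real.exp_le_exp.mpr; linarith
    have h3 : Real.exp (-1) < 1 / 2 := by
      rw [Real.exp_neg, inv_lt_comm₀ (Real.exp_pos 1) (by norm_num)]
      nlinarith [Real.exp_one_gt_d9]
    nlinarith [hEc, hμ, hτ]
  -- tangent-line bound for exp
  have htan : Real.exp (-μ * τstar) * (1 + μ * τstar - μ * τ) ≤ Real.exp (-μ * τ) := by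
    have h4 : (μ * τstar - μ * τ) + 1 ≤ Real.exp (μ * τstar - μ * τ) :=
      Real.add_one_le_exp _
    calc Real.exp (-μ * τstar) * (1 + μ * τstar - μ * τ)
        ≤ Real.exp (-μ * τstar) * Real.exp (μ * τstar - μ * τ) := by
          apply mul_le_mul_of_nonneg_left (by linarith) hEs.le
      _ = Real.exp (-μ * τ) := by rw [← Real.exp_add]; ring_nf
  have hcoef : (0:ℝ) < 2 + 2 * μ * τ - 2 * μ * τstar := by
    nlinarith [mul_nonneg hμ.le hτ0]
  have htan' : (μ ^ 2 * τstar ^ 2 / 2) * (1 + μ * τstar - μ * τ) ≤ Real.exp (-μ * τ) := by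
    rw [← hEc]; exact htan
  -- key polynomial inequality
  have h6 : 0 ≤ (μ * τ - μ * τstar) ^ 2 * (1 - (μ * τstar) ^ 2) :=
    mul_nonneg (sq_nonneg _) (by nlinarith [mul_pos hμ hτ])
  have hkey : 0 ≤ μ ^ 2 * τ ^ 2 - 2 * μ ^ 2 * τstar * τ +
      (2 + 2 * μ * τ - 2 * μ * τstar) * Real.exp (-μ * τ) := by
    have h5 := mul_le_mul_of_nonneg_left htan' hcoef.le
    nlinarith [h5, h6]
  -- conclude
  rw [havg τ hτ0, hfix, le_div_iff₀ hDτ]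
  have hiden : τ ^ 2 + (2 / μ ^ 2 + 2 * τ / μ) * Real.exp (-μ * τ) -
      τstar * (2 * (τ + (1 / μ) * Real.exp (-μ * τ))) =
      (μ ^ 2 * τ ^ 2 - 2 * μ ^ 2 * τstar * τ +
        (2 + 2 * μ * τ - 2 * μ * τstar) * Real.exp (-μ * τ)) / μ ^ 2 := by
    field_simp
    ring
  have h7 := div_nonneg hkey hμ2.le
  linarith [hiden, h7]
end

section
/- The constant 2W(1/√2) satisfies 0.90 < 2W(1/√2) < 0.91; in particular, the optimal single-threshold policy achieves average age strictly less than that of the zero-wait policy, i.e., 2W(1/√2)/μ < 1/μ for all μ > 0. -/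
open Real

lemma exp_45_ub : Real.exp 0.45 < 1.569 := by
  have h := Real.exp_bound' (x := 0.45) (by norm_num) (by norm_num) (n := 4) (by norm_num)
  calc Real.exp 0.45 ≤ (∑ m ∈ Finset.range 4, (0.45:ℝ) ^ m / m.factorial) +
        (0.45:ℝ) ^ 4 * (4 + 1) / (Nat.factorial 4 * 4) := h
    _ < 1.569 := by
        simp [Finset.sum_range_succ, Nat.factorial]
        norm_num

lemma exp_455_lb : (1.556:ℝ) < Real.exp 0.455 := by
  have h1 : (1.0455:ℝ) ≤ Real.exp 0.0455 := by
    have := Real.add_one_le_exp (0.0455:ℝ); linarith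
  have h2 : ((1.0455:ℝ)) ^ (10:ℕ) ≤ (Real.exp 0.0455) ^ (10:ℕ) :=
    pow_le_pow_left₀ (by norm_num) h1 10
  have h3 : (Real.exp 0.0455) ^ (10:ℕ) = Real.exp 0.455 := by
    rw [← Real.exp_nat_mul]; norm_num
  have h4 : (1.556:ℝ) < (1.0455:ℝ) ^ (10:ℕ) := by norm_num
  linarith

/-- `0.90 < 2 W(1/√2) < 0.91`; in particular the optimal single-threshold policy's
average age `2 W(1/√2)/μ` is strictly less than the zero-wait policy's `1/μ`. -/
theorem optimal_age_less_than_zero_wait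
    (W : ℝ → ℝ)
    (hW : ∀ x ≥ (0:ℝ), 0 ≤ W x ∧ W x * Real.exp (W x) = x) :
    ((0.90 : ℝ) < 2 * W (1 / Real.sqrt 2) ∧ 2 * W (1 / Real.sqrt 2) < (0.91 : ℝ)) ∧
      ∀ μ : ℝ, 0 < μ → 2 * W (1 / Real.sqrt 2) / μ < 1 / μ := by
  have hs2pos : (0:ℝ) < Real.sqrt 2 := Real.sqrt_pos.mpr (by norm_num)
  have hxpos : (0:ℝ) < 1 / Real.sqrt 2 := by positivity
  obtain ⟨hw0, hwe⟩ := hW (1 / Real.sqrt 2) hxpos.le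
  set w := W (1 / Real.sqrt 2) with hwdef
  -- bounds on sqrt 2
  have hs2u : Real.sqrt 2 < 1.41422 := by
    rw [show (1.41422:ℝ) = Real.sqrt (1.41422^2) by
      rw [Real.sqrt_sq]; norm_num]
    exact Real.sqrt_lt_sqrt (by norm_num) (by norm_num)
  have hs2l : (1.41421:ℝ) < Real.sqrt 2 := by
    rw [show (1.41421:ℝ) = Real.sqrt (1.41421^2) by
      rw [Real.sqrt_sq]; norm_num]
    exact Real.sqrt_lt_sqrt (by norm_num) (by norm_num)
  have hxl : (0.7071:ℝ) < 1 / Real.sqrt 2 := by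
    rw [lt_div_iff₀ hs2pos]; nlinarith
  have hxu : 1 / Real.sqrt 2 < (0.70711:ℝ) := by
    rw [div_lt_iff₀ hs2pos]; nlinarith
  -- strict monotonicity of t * exp t on [0, ∞)
  have hmono : StrictMonoOn (fun t : ℝ => t * Real.exp t) (Set.Ici 0) := by
    intro a ha b hb hab
    exact mul_lt_mul'' hab (Real.exp_lt_exp.mpr hab) ha (Real.exp_pos a).le
  -- f(0.45) < f(w)
  have hA : (0.45:ℝ) * Real.exp 0.45 < w * Real.exp w := by
    rw [hwe]
    have := exp_45_ub
    nlinarith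
  -- f(w) < f(0.455)
  have hB : w * Real.exp w < (0.455:ℝ) * Real.exp 0.455 := by
    rw [hwe]
    have := exp_455_lb
    nlinarith
  have h1 : (0.45:ℝ) < w :=
    (hmono.lt_iff_lt (by norm_num) hw0).mp hA
  have h2 : w < (0.455:ℝ) :=
    (hmono.lt_iff_lt hw0 (by norm_num)).mp hB
  refine ⟨⟨by linarith, by linarith⟩, fun μ hμ => ?_⟩
  rw [div_lt_div_iff₀ hμ hμ]
  nlinarith
end
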